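/- arXiv:1412.3519 — 2 statements merged into one kernel-verified Lean document; each statement's English description precedes it below -/
import Mathlib

section
/- Let Ω ⊂ ℝ^N be a bounded convex domain and let u, v ∈ C(Ω̄) be convex functions such that the Monge-Ampère measure of u dominates that of v on every Borel set e ⊂ Ω (μ[u](e) ≥ μ[v](e)) and u ≤ v on ∂Ω. Then u(x) ≤ v(x) for all x ∈ Ω. -/
open Set MeasureTheory Pointwise

/-- The normal mapping (subdifferential image) of `u : Ω → ℝ` over a subset `e`. -/
def nmImage {n : ℕ} (Ω : Set (EuclideanSpace ℝ (Fin n)))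
    (u : EuclideanSpace ℝ (Fin n) → ℝ) (e : Set (EuclideanSpace ℝ (Fin n))) :
    Set (EuclideanSpace ℝ (Fin n)) :=
  {p | ∃ x₀ ∈ e, ∀ x ∈ Ω, u x₀ + @inner ℝ _ _ p (x - x₀) ≤ u x}


lemma exists_subgradient {N : ℕ} {Ω : Set (EuclideanSpace ℝ (Fin N))}
    (hΩopen : IsOpen Ω) {u : EuclideanSpace ℝ (Fin N) → ℝ}
    (hu : ContinuousOn u Ω) (huc : ConvexOn ℝ Ω u)
    {z : EuclideanSpace ℝ (Fin N)} (hz : z ∈ Ω) :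
    ∃ r : EuclideanSpace ℝ (Fin N), ∀ x ∈ Ω, u z + @inner ℝ _ _ r (x - z) ≤ u x := by
  classical
  set A : Set ((EuclideanSpace ℝ (Fin N)) × ℝ) := {p | p.1 ∈ Ω ∧ u p.1 < p.2} with hA
  have hAopen : IsOpen A := by
    have h2 : ContinuousOn (fun p : (EuclideanSpace ℝ (Fin N)) × ℝ => u p.1 - p.2)
        (Prod.fst ⁻¹' Ω) := by
      exact (hu.comp continuous_fst.continuousOn (fun p hp => hp)).sub
        continuous_snd.continuousOn
    have h3 := h2.isOpen_inter_preimage (t := Iio 0) (hΩopen.preimage continuous_fst) isOpen_Iio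
    have h4 : A = (Prod.fst ⁻¹' Ω) ∩
        (fun p : (EuclideanSpace ℝ (Fin N)) × ℝ => u p.1 - p.2) ⁻¹' (Iio 0) := by
      ext p; simp [hA, sub_neg]
    rwa [h4]
  have hAconv : Convex ℝ A := by
    rintro ⟨x, s⟩ ⟨hx, hxs⟩ ⟨y, t⟩ ⟨hy, hyt⟩ a b ha hb hab
    have hmem : (a • ((x, s) : _ × ℝ) + b • (y, t)).1 = a • x + b • y := rfl
    have hmem2 : (a • ((x, s) : _ × ℝ) + b • (y, t)).2 = a * s + b * t := rfl
    refine ⟨by rw [hmem]; exact huc.1 hx hy ha hb hab, ?_⟩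
    rw [hmem, hmem2]
    have h4 : u (a • x + b • y) ≤ a * u x + b * u y := huc.2 hx hy ha hb hab
    have h5 : a * u x + b * u y < a * s + b * t := by
      rcases eq_or_lt_of_le ha with h | h
      · have hb1 : b = 1 := by linarith
        simp [← h, hb1, hyt]
      · rcases eq_or_lt_of_le hb with h' | h'
        · have ha1 : a = 1 := by linarith
          simp [← h', ha1, hxs]
        · have := mul_lt_mul_of_pos_left hxs h
          have := mul_lt_mul_of_pos_left hyt h'
          linarith
    exact lt_of_le_of_lt h4 h5
  have hzA : ((z, u z) : _ × ℝ) ∉ A := fun h => lt_irrefl _ h.2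
  obtain ⟨L, hL⟩ := geometric_hahn_banach_open_point hAconv hAopen hzA
  set c : ℝ := L (0, 1) with hc
  have hdecomp : ∀ (x : EuclideanSpace ℝ (Fin N)) (t : ℝ), L (x, t) = L (x, 0) + t * c := by
    intro x t
    have h6 : ((x, t) : _ × ℝ) = (x, 0) + t • ((0 : EuclideanSpace ℝ (Fin N)), (1 : ℝ)) := by
      simp [Prod.ext_iff]
    rw [h6, map_add, L.map_smul, smul_eq_mul]
  have hcneg : c < 0 := by
    have h1 : L (z, u z + 1) < L (z, u z) :=
      hL _ ⟨hz, show u z < u z + 1 by linarith⟩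
    rw [hdecomp z (u z + 1), hdecomp z (u z)] at h1
    linarith
  have hc0 : c ≠ 0 := ne_of_lt hcneg
  have key : ∀ x ∈ Ω, L (x, 0) + u x * c ≤ L (z, 0) + u z * c := by
    intro x hx
    by_contra hcon
    push_neg at hcon
    set D : ℝ := L (x, 0) + u x * c - (L (z, 0) + u z * c) with hD
    have hD0 : 0 < D := by simp only [hD]; linarith
    set ε : ℝ := D / (-2 * c) with hε
    have hε0 : 0 < ε := by
      apply div_pos hD0; linarith
    have hεc : ε * c = -D / 2 := by
      rw [hε]; field_simp
    have h7 : L (x, u x + ε) < L (z, u z) :=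
      hL _ ⟨hx, show u x < u x + ε by linarith⟩
    rw [hdecomp x (u x + ε), hdecomp z (u z)] at h7
    have h8 : L (x, 0) + (u x + ε) * c = L (x, 0) + u x * c + ε * c := by ring
    rw [h8, hεc] at h7
    linarith
  set L₁ : (EuclideanSpace ℝ (Fin N)) →L[ℝ] ℝ :=
    L.comp (ContinuousLinearMap.inl ℝ (EuclideanSpace ℝ (Fin N)) ℝ) with hL₁
  have hL₁app : ∀ x : EuclideanSpace ℝ (Fin N), L₁ x = L (x, 0) := fun x => rfl
  set g : (EuclideanSpace ℝ (Fin N)) →L[ℝ] ℝ := (-c)⁻¹ • L₁ with hg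
  refine ⟨(InnerProductSpace.toDual ℝ (EuclideanSpace ℝ (Fin N))).symm g, fun x hx => ?_⟩
  have h8 : @inner ℝ _ _ ((InnerProductSpace.toDual ℝ (EuclideanSpace ℝ (Fin N))).symm g) (x - z)
      = g (x - z) := InnerProductSpace.toDual_symm_apply
  rw [h8]
  have h9 : g (x - z) = (-c)⁻¹ * (L (x, 0) - L (z, 0)) := by
    have h10 : ((x - z, 0) : _ × ℝ) = (x, 0) - (z, 0) := by simp [Prod.ext_iff]
    have h11 : L₁ (x - z) = L ((x, 0) - (z, 0)) := by rw [hL₁app (x - z), h10]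
    rw [hg, ContinuousLinearMap.smul_apply, smul_eq_mul, h11, map_sub]
  rw [h9]
  have hcn : (0:ℝ) < -c := by linarith
  have h12 : L (x, 0) - L (z, 0) ≤ (u z - u x) * c := by nlinarith [key x hx]
  have h13 : (-c)⁻¹ * (L (x, 0) - L (z, 0)) ≤ (-c)⁻¹ * ((u z - u x) * c) :=
    mul_le_mul_of_nonneg_left h12 (by positivity)
  have h14 : (-c)⁻¹ * ((u z - u x) * c) = u x - u z := by
    field_simp; ring
  linarith


lemma nm_incl {N : ℕ} {Ω : Set (EuclideanSpace ℝ (Fin N))}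
    {v w : EuclideanSpace ℝ (Fin N) → ℝ}
    (hv : ContinuousOn v (closure Ω)) (hvc : ConvexOn ℝ (closure Ω) v)
    {G : Set (EuclideanSpace ℝ (Fin N))}
    (hG : G = {x ∈ Ω | v x < w x}) (hGopen : IsOpen G)
    (hGcl : closure G ⊆ Ω) (hGbd : Bornology.IsBounded G) :
    nmImage Ω w G ⊆ nmImage Ω v G := by
  rintro s ⟨x₁, hx₁G, hs⟩
  have hGΩ : G ⊆ Ω := fun x hx => hGcl (subset_closure hx)
  have hx₁ : x₁ ∈ Ω := hGΩ hx₁G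
  have hclΩ : closure G ⊆ closure Ω := hGcl.trans subset_closure
  set h : EuclideanSpace ℝ (Fin N) → ℝ := fun x => v x - @inner ℝ _ _ s x with hh
  have hcomp : IsCompact (closure G) :=
    Metric.isCompact_of_isClosed_isBounded isClosed_closure hGbd.closure
  have hconth : ContinuousOn h (closure G) := by
    apply ContinuousOn.sub (hv.mono hclΩ)
    exact (Continuous.inner continuous_const continuous_id).continuousOn
  obtain ⟨x₂, hx₂cl, hx₂min⟩ := hcomp.exists_isMinOn ⟨x₁, subset_closure hx₁G⟩ hconth
  have hmin : ∀ y ∈ closure G, h x₂ ≤ h y := hx₂min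
  have hx₂G : x₂ ∈ G := by
    by_contra hx₂G
    have hx₂Ω : x₂ ∈ Ω := hGcl hx₂cl
    have hwv : w x₂ ≤ v x₂ := by
      by_contra hlt
      push_neg at hlt
      exact hx₂G (by rw [hG]; exact ⟨hx₂Ω, hlt⟩)
    have h1 : w x₁ + @inner ℝ _ _ s (x₂ - x₁) ≤ w x₂ := hs x₂ hx₂Ω
    have h2 : @inner ℝ _ _ s (x₂ - x₁) = @inner ℝ _ _ s x₂ - @inner ℝ _ _ s x₁ :=
      inner_sub_right s x₂ x₁
    have h3 : v x₁ < w x₁ := by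
      rw [hG] at hx₁G; exact hx₁G.2
    have h4 : h x₂ ≤ h x₁ := hmin x₁ (subset_closure hx₁G)
    simp only [hh] at h4
    linarith
  refine ⟨x₂, hx₂G, fun y hy => ?_⟩
  rcases eq_or_ne y x₂ with rfl | hne
  · simp
  · obtain ⟨ε, hε0, hball⟩ := Metric.isOpen_iff.mp hGopen x₂ hx₂G
    set t : ℝ := min 1 (ε / (2 * (‖y - x₂‖ + 1))) with ht
    have hny : (0:ℝ) < ‖y - x₂‖ := by
      rw [norm_pos_iff]; exact sub_ne_zero_of_ne hne
    have ht0 : 0 < t := by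
      apply lt_min one_pos
      positivity
    have ht1 : t ≤ 1 := min_le_left _ _
    set p : EuclideanSpace ℝ (Fin N) := x₂ + t • (y - x₂) with hp
    have hpG : p ∈ G := by
      apply hball
      rw [Metric.mem_ball, dist_eq_norm, hp]
      have : x₂ + t • (y - x₂) - x₂ = t • (y - x₂) := by abel
      rw [this, norm_smul, Real.norm_eq_abs, abs_of_pos ht0]
      have h5 : t ≤ ε / (2 * (‖y - x₂‖ + 1)) := min_le_right _ _
      have h6 : t * ‖y - x₂‖ ≤ ε / (2 * (‖y - x₂‖ + 1)) * ‖y - x₂‖ :=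
        mul_le_mul_of_nonneg_right h5 (norm_nonneg _)
      have h7 : ε / (2 * (‖y - x₂‖ + 1)) * ‖y - x₂‖ < ε := by
        rw [div_mul_eq_mul_div, div_lt_iff₀ (by positivity)]
        nlinarith
      linarith
    have hmin2 : h x₂ ≤ h p := hmin p (subset_closure hpG)
    have hcvx : v p ≤ (1 - t) * v x₂ + t * v y := by
      have hx₂c : x₂ ∈ closure Ω := subset_closure (hGcl hx₂cl)
      have hyc : y ∈ closure Ω := subset_closure hy
      have hpc : p = (1 - t) • x₂ + t • y := by
        rw [hp]; module
      rw [hpc]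
      exact hvc.2 hx₂c hyc (by linarith) (le_of_lt ht0) (by ring)
    have hinner : @inner ℝ _ _ s p - @inner ℝ _ _ s x₂ = t * @inner ℝ _ _ s (y - x₂) := by
      have : p - x₂ = t • (y - x₂) := by rw [hp]; abel
      rw [← inner_sub_right, this, real_inner_smul_right]
    simp only [hh] at hmin2
    have h8 : t * @inner ℝ _ _ s (y - x₂) ≤ t * (v y - v x₂) := by linarith
    have h9 : @inner ℝ _ _ s (y - x₂) ≤ v y - v x₂ :=
      le_of_mul_le_mul_left (by linarith) ht0
    linarith

set_option maxHeartbeats 2000000 in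
theorem stmt16 (N : ℕ) (hN : 2 ≤ N)
    (Ω : Set (EuclideanSpace ℝ (Fin N))) (hΩopen : IsOpen Ω)
    (hΩconv : Convex ℝ Ω) (hΩbd : Bornology.IsBounded Ω)
    (u v : EuclideanSpace ℝ (Fin N) → ℝ)
    (hu : ContinuousOn u (closure Ω)) (hv : ContinuousOn v (closure Ω))
    (huc : ConvexOn ℝ (closure Ω) u) (hvc : ConvexOn ℝ (closure Ω) v)
    (hdom : ∀ e : Set (EuclideanSpace ℝ (Fin N)), e ⊆ Ω → MeasurableSet e →
      volume (nmImage Ω v e) ≤ volume (nmImage Ω u e))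
    (hbd : ∀ x ∈ frontier Ω, u x ≤ v x) :
    ∀ x ∈ Ω, u x ≤ v x := by
  intro z hz
  by_contra hcon
  push_neg at hcon
  have hzcl : z ∈ closure Ω := subset_closure hz
  have hcompΩ : IsCompact (closure Ω) :=
    Metric.isCompact_of_isClosed_isBounded isClosed_closure hΩbd.closure
  have hne : (closure Ω).Nonempty := ⟨z, hzcl⟩
  obtain ⟨xm, hxm, hmmin⟩ := hcompΩ.exists_isMinOn hne hu
  obtain ⟨xM, hxM, hMmax⟩ := hcompΩ.exists_isMaxOn hne hu
  set m : ℝ := u xm with hm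
  set K : ℝ := u xM + 1 with hK
  have hum : ∀ x ∈ closure Ω, m ≤ u x := hmmin
  have huK : ∀ x ∈ closure Ω, u x ≤ K - 1 := by
    intro x hx
    have h : u x ≤ u xM := hMmax hx
    simp only [hK]; linarith
  have hKm : (1:ℝ) ≤ K - m := by
    have h : m ≤ u xM := hum _ hxM
    simp only [hK]; linarith
  -- the radius d
  obtain ⟨d₀, hd₀⟩ := hΩbd.closure.subset_closedBall z
  set d : ℝ := max d₀ 1 with hd
  have hd1 : (1:ℝ) ≤ d := le_max_right _ _
  have hdd : ∀ x ∈ closure Ω, ‖x - z‖ ≤ d := by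
    intro x hx
    have := hd₀ hx
    rw [Metric.mem_closedBall, dist_eq_norm] at this
    exact this.trans (le_max_left _ _)
  set M : ℝ := u z - v z with hM
  have hM0 : 0 < M := sub_pos.mpr hcon
  have hDen : (0:ℝ) < (K - m) + d^2 + 1 := by nlinarith
  set δ : ℝ := M / (2 * ((K - m) + d^2 + 1)) with hδ
  have hδ0 : 0 < δ := by positivity
  have hδhalf : δ * ((K - m) + d^2 + 1) = M / 2 := by
    rw [hδ]; field_simp
  set C₂ : ℝ := δ * (K - m) + δ * d^2 with hC₂
  have hC₂M : C₂ < M / 2 := by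
    have : C₂ = M / 2 - δ := by rw [hC₂, ← hδhalf]; ring
    rw [this]; linarith
  have hδKm : δ * (K - m) < M / 2 := by nlinarith [sq_nonneg d]
  -- the two comparison functions
  set w₁ : EuclideanSpace ℝ (Fin N) → ℝ := fun x => (1 + δ) * u x - δ * K with hw₁
  set w₂ : EuclideanSpace ℝ (Fin N) → ℝ := fun x => u x + δ * ‖x - z‖^2 - C₂ with hw₂
  have hw₁cont : ContinuousOn w₁ (closure Ω) :=
    (continuousOn_const.mul hu).sub continuousOn_const
  have hnormsq : Continuous fun x : EuclideanSpace ℝ (Fin N) => ‖x - z‖^2 :=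
    ((continuous_id.sub continuous_const).norm.pow 2)
  have hw₂cont : ContinuousOn w₂ (closure Ω) :=
    (hu.add (continuousOn_const.mul hnormsq.continuousOn)).sub continuousOn_const
  -- frontier bounds
  have hfront : ∀ x ∈ frontier Ω, w₁ x ≤ v x - δ ∧ w₂ x ≤ v x - δ := by
    intro x hx
    have hxc : x ∈ closure Ω := frontier_subset_closure hx
    have h1 : u x ≤ v x := hbd x hx
    have h2 : u x ≤ K - 1 := huK x hxc
    have h3 : m ≤ u x := hum x hxc
    have h4 : ‖x - z‖ ≤ d := hdd x hxc
    have h5 : ‖x - z‖^2 ≤ d^2 := by nlinarith [norm_nonneg (x - z)]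
    constructor
    · simp only [hw₁]; nlinarith
    · simp only [hw₂, hC₂]; nlinarith
  -- z in both sets
  set G₁ : Set (EuclideanSpace ℝ (Fin N)) := {x ∈ Ω | v x < w₁ x} with hG₁
  set G₂ : Set (EuclideanSpace ℝ (Fin N)) := {x ∈ Ω | v x < w₂ x} with hG₂
  have hzG₂ : z ∈ G₂ := by
    refine ⟨hz, ?_⟩
    simp only [hw₂, sub_self, norm_zero]
    have : (0:ℝ)^2 = 0 := by norm_num
    rw [this]
    simp only [hM] at hC₂M hM0
    linarith
  have hzG₁ : z ∈ G₁ := by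
    refine ⟨hz, ?_⟩
    have h3 : m ≤ u z := hum _ hzcl
    simp only [hw₁]
    simp only [hM] at hδKm hM0
    nlinarith
  have hG₂G₁ : G₂ ⊆ G₁ := by
    rintro x ⟨hxΩ, hxlt⟩
    refine ⟨hxΩ, lt_of_lt_of_le hxlt ?_⟩
    have hxc : x ∈ closure Ω := subset_closure hxΩ
    have h3 : m ≤ u x := hum x hxc
    have h4 : ‖x - z‖ ≤ d := hdd x hxc
    have h5 : ‖x - z‖^2 ≤ d^2 := by nlinarith [norm_nonneg (x - z)]
    simp only [hw₁, hw₂, hC₂]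
    nlinarith
  -- openness
  have hopen : ∀ w : EuclideanSpace ℝ (Fin N) → ℝ, ContinuousOn w (closure Ω) →
      IsOpen {x ∈ Ω | v x < w x} := by
    intro w hw
    have hcont : ContinuousOn (fun x => w x - v x) Ω :=
      (hw.mono subset_closure).sub (hv.mono subset_closure)
    have heq : {x ∈ Ω | v x < w x} = Ω ∩ (fun x => w x - v x) ⁻¹' (Ioi 0) := by
      ext x; simp [sub_pos]
    rw [heq]
    exact hcont.isOpen_inter_preimage hΩopen isOpen_Ioi
  have hG₁open : IsOpen G₁ := hopen w₁ hw₁cont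
  have hG₂open : IsOpen G₂ := hopen w₂ hw₂cont
  -- closures inside Ω
  have hclosure : ∀ w : EuclideanSpace ℝ (Fin N) → ℝ, ContinuousOn w (closure Ω) →
      (∀ x ∈ frontier Ω, w x ≤ v x - δ) → closure {x ∈ Ω | v x < w x} ⊆ Ω := by
    intro w hw hfr
    have hS : IsClosed {x ∈ closure Ω | v x ≤ w x} :=
      isClosed_closure.isClosed_le hv hw
    have hsub : {x ∈ Ω | v x < w x} ⊆ {x ∈ closure Ω | v x ≤ w x} :=
      fun x hx => ⟨subset_closure hx.1, le_of_lt hx.2⟩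
    intro x hx
    have hxS : x ∈ {x ∈ closure Ω | v x ≤ w x} :=
      closure_minimal hsub hS hx
    by_contra hxΩ
    have hxfr : x ∈ frontier Ω := by
      rw [hΩopen.frontier_eq]
      exact ⟨hxS.1, hxΩ⟩
    have := hfr x hxfr
    have := hxS.2
    linarith
  have hG₁cl : closure G₁ ⊆ Ω := hclosure w₁ hw₁cont (fun x hx => (hfront x hx).1)
  have hG₂cl : closure G₂ ⊆ Ω := hclosure w₂ hw₂cont (fun x hx => (hfront x hx).2)
  have hG₁Ω : G₁ ⊆ Ω := fun x hx => hx.1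
  have hG₂Ω : G₂ ⊆ Ω := fun x hx => hx.1
  -- subgradient of u at z
  obtain ⟨r, hr⟩ := exists_subgradient hΩopen (hu.mono subset_closure)
    (huc.subset subset_closure hΩconv) hz
  have hrcl : ∀ x ∈ closure Ω, u z + @inner ℝ _ _ r (x - z) ≤ u x := by
    have hcont1 : ContinuousOn (fun x => u z + @inner ℝ _ _ r (x - z)) (closure Ω) :=
      (continuous_const.add (Continuous.inner continuous_const
        (continuous_id.sub continuous_const))).continuousOn
    exact fun x hx => le_on_closure hr hcont1 hu hx
  -- small ball around z inside G₂
  obtain ⟨ε, hε0, hball⟩ := Metric.isOpen_iff.mp hG₂open z hzG₂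
  set ρ : ℝ := ε / 2 with hρ
  have hρ0 : 0 < ρ := by positivity
  have hcball : Metric.closedBall z ρ ⊆ G₂ :=
    subset_trans (Metric.closedBall_subset_ball (by simp only [hρ]; linarith)) hball
  -- ball of slopes inside nmImage Ω w₂ G₂
  have hslopes : Metric.ball r (δ * ρ) ⊆ nmImage Ω w₂ G₂ := by
    intro s hs
    rw [Metric.mem_ball, dist_eq_norm] at hs
    have hφcont : ContinuousOn (fun x => w₂ x - @inner ℝ _ _ s x) (closure Ω) :=
      hw₂cont.sub (Continuous.inner continuous_const continuous_id).continuousOn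
    obtain ⟨xs, hxscl, hxsmin⟩ := hcompΩ.exists_isMinOn hne hφcont
    have hmin : ∀ y ∈ closure Ω, w₂ xs - @inner ℝ _ _ s xs ≤ w₂ y - @inner ℝ _ _ s y := hxsmin
    -- xs is close to z
    have hkey1 : u xs + δ * ‖xs - z‖^2 - @inner ℝ _ _ s xs ≤ u z - @inner ℝ _ _ s z := by
      have := hmin z hzcl
      simp only [hw₂, sub_self, norm_zero] at this
      have h0 : (0:ℝ)^2 = 0 := by norm_num
      rw [h0] at this
      linarith
    have hkey2 : u z + @inner ℝ _ _ r (xs - z) ≤ u xs := hrcl xs hxscl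
    have hinner1 : @inner ℝ _ _ s xs - @inner ℝ _ _ s z = @inner ℝ _ _ s (xs - z) :=
      (inner_sub_right s xs z).symm
    have hkey3 : δ * ‖xs - z‖^2 ≤ @inner ℝ _ _ (s - r) (xs - z) := by
      rw [inner_sub_left]
      linarith [hkey1, hkey2, hinner1]
    have hCS : @inner ℝ _ _ (s - r) (xs - z) ≤ ‖s - r‖ * ‖xs - z‖ :=
      real_inner_le_norm _ _
    have hxsz : ‖xs - z‖ ≤ ρ := by
      by_contra hgt
      push_neg at hgt
      have h1 : δ * ‖xs - z‖^2 ≤ ‖s - r‖ * ‖xs - z‖ := le_trans hkey3 hCS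
      have hn0 : 0 < ‖xs - z‖ := lt_trans hρ0 hgt
      have e1 : ‖s - r‖ * ‖xs - z‖ < (δ * ρ) * ‖xs - z‖ := mul_lt_mul_of_pos_right hs hn0
      have e2 : (δ * ρ) * ‖xs - z‖ < δ * ‖xs - z‖ * ‖xs - z‖ :=
        mul_lt_mul_of_pos_right (mul_lt_mul_of_pos_left hgt hδ0) hn0
      have e3 : ‖xs - z‖^2 = ‖xs - z‖ * ‖xs - z‖ := by ring
      rw [e3] at h1
      nlinarith
    have hxsG₂ : xs ∈ G₂ := hcball (by rw [Metric.mem_closedBall, dist_eq_norm]; exact hxsz)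
    refine ⟨xs, hxsG₂, fun y hy => ?_⟩
    have := hmin y (subset_closure hy)
    have hinner2 : @inner ℝ _ _ s (y - xs) = @inner ℝ _ _ s y - @inner ℝ _ _ s xs :=
      inner_sub_right s y xs
    linarith
  -- inclusion lemmas
  have hincl₁ : nmImage Ω w₁ G₁ ⊆ nmImage Ω v G₁ :=
    nm_incl hv hvc hG₁ hG₁open hG₁cl (hΩbd.subset hG₁Ω)
  have hincl₂ : nmImage Ω w₂ G₂ ⊆ nmImage Ω v G₂ :=
    nm_incl hv hvc hG₂ hG₂open hG₂cl (hΩbd.subset hG₂Ω)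
  -- boundedness of nmImage Ω u G₁
  obtain ⟨ρ₁, hρ₁0, hthick⟩ := (Metric.isCompact_of_isClosed_isBounded isClosed_closure
      (hΩbd.subset hG₁Ω).closure).exists_thickening_subset_open hΩopen hG₁cl
  have hRnn : (0:ℝ) ≤ 2 * (K - 1 - m) / ρ₁ := by
    apply div_nonneg _ (le_of_lt hρ₁0)
    nlinarith
  have hbdd : nmImage Ω u G₁ ⊆ Metric.closedBall 0 (2 * (K - 1 - m) / ρ₁) := by
    rintro s ⟨x₁, hx₁, hsupp⟩
    rw [Metric.mem_closedBall, dist_zero_right]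
    rcases eq_or_ne s 0 with rfl | hs0
    · simpa using hRnn
    · have hsn : (0:ℝ) < ‖s‖ := norm_pos_iff.mpr hs0
      set y : EuclideanSpace ℝ (Fin N) := x₁ + (ρ₁ / 2) • (‖s‖⁻¹ • s) with hy
      have hyΩ : y ∈ Ω := by
        apply hthick
        rw [Metric.mem_thickening_iff]
        refine ⟨x₁, subset_closure hx₁, ?_⟩
        rw [dist_eq_norm, hy]
        have h1 : x₁ + (ρ₁ / 2) • (‖s‖⁻¹ • s) - x₁ = (ρ₁ / 2) • (‖s‖⁻¹ • s) := by abel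
        rw [h1, norm_smul, norm_smul, norm_inv, norm_norm, Real.norm_eq_abs,
          abs_of_pos (by linarith : (0:ℝ) < ρ₁ / 2)]
        rw [inv_mul_cancel₀ (ne_of_gt hsn)]
        linarith
      have h2 := hsupp y hyΩ
      have h3 : y - x₁ = (ρ₁ / 2) • (‖s‖⁻¹ • s) := by rw [hy]; abel
      have h4 : @inner ℝ _ _ s (y - x₁) = (ρ₁ / 2) * ‖s‖ := by
        rw [h3, real_inner_smul_right, real_inner_smul_right, real_inner_self_eq_norm_sq]
        field_simp
      rw [h4] at h2
      have h5 : m ≤ u x₁ := hum _ (subset_closure (hG₁Ω hx₁))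
      have h6 : u y ≤ K - 1 := huK _ (subset_closure hyΩ)
      rw [le_div_iff₀ hρ₁0]
      nlinarith
  -- scaling identity
  have hδ1 : (0:ℝ) < 1 + δ := by linarith
  have hscale : nmImage Ω w₁ G₁ = (1 + δ) • nmImage Ω u G₁ := by
    ext s
    constructor
    · rintro ⟨x₁, hx₁, hsupp⟩
      refine ⟨(1 + δ)⁻¹ • s, ⟨x₁, hx₁, fun x hx => ?_⟩, smul_inv_smul₀ (ne_of_gt hδ1) s⟩
      have h1 := hsupp x hx
      simp only [hw₁] at h1
      rw [real_inner_smul_left]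
      rw [← mul_le_mul_iff_right₀ hδ1]
      have hinv : (1 + δ) * ((1 + δ)⁻¹ * @inner ℝ _ _ s (x - x₁)) = @inner ℝ _ _ s (x - x₁) := by
        field_simp
      nlinarith [hinv]
    · rintro ⟨t, ⟨x₁, hx₁, hsupp⟩, rfl⟩
      refine ⟨x₁, hx₁, fun x hx => ?_⟩
      have h1 := hsupp x hx
      simp only [hw₁]
      rw [real_inner_smul_left]
      nlinarith
  -- endgame
  have h2 := hdom G₂ hG₂Ω hG₂open.measurableSet
  have h1 := hdom G₁ hG₁Ω hG₁open.measurableSet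
  have hmono : nmImage Ω u G₂ ⊆ nmImage Ω u G₁ := by
    rintro s ⟨x₁, hx₁, hsupp⟩
    exact ⟨x₁, hG₂G₁ hx₁, hsupp⟩
  have hP0 : 0 < volume (nmImage Ω u G₁) := by
    calc (0:ENNReal) < volume (Metric.ball r (δ * ρ)) :=
          Metric.measure_ball_pos volume r (by positivity)
      _ ≤ volume (nmImage Ω w₂ G₂) := measure_mono hslopes
      _ ≤ volume (nmImage Ω v G₂) := measure_mono hincl₂
      _ ≤ volume (nmImage Ω u G₂) := h2
      _ ≤ volume (nmImage Ω u G₁) := measure_mono hmono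
  have hPtop : volume (nmImage Ω u G₁) < ⊤ :=
    lt_of_le_of_lt (measure_mono hbdd) measure_closedBall_lt_top
  have hvol : volume (nmImage Ω w₁ G₁) =
      ENNReal.ofReal ((1 + δ)^N) * volume (nmImage Ω u G₁) := by
    rw [hscale, Measure.addHaar_smul]
    congr 2
    rw [finrank_euclideanSpace_fin]
    rw [abs_of_pos (by positivity)]
  have hchain : ENNReal.ofReal ((1 + δ)^N) * volume (nmImage Ω u G₁)
      ≤ volume (nmImage Ω u G₁) := by
    rw [← hvol]
    exact le_trans (measure_mono hincl₁) h1
  have hle1 : ENNReal.ofReal ((1 + δ)^N) ≤ 1 := by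
    have hstep : ENNReal.ofReal ((1 + δ)^N) * volume (nmImage Ω u G₁)
        ≤ 1 * volume (nmImage Ω u G₁) := by
      rw [one_mul]; exact hchain
    exact (ENNReal.mul_le_mul_iff_left (ne_of_gt hP0) (ne_of_lt hPtop)).mp hstep
  rw [ENNReal.ofReal_le_one] at hle1
  have hpow : (1:ℝ) < (1 + δ)^N := one_lt_pow₀ (by linarith) (by omega)
  linarith
end

section
/- Let u : Ω → ℝ be a continuous function on an open set Ω ⊂ ℝ^N, and define the normal mapping ∂u(x₀) = {p ∈ ℝ^N : u(x) ≥ u(x₀) + p·(x − x₀) for all x ∈ Ω} and ∂u(e) = ⋃_{x∈e} ∂u(x) for e ⊂ Ω. Then the class S = {e ⊂ Ω : ∂u(e) is Lebesgue measurable} is a Borel σ-algebra containing the Borel sets, and the set function Mu(e) = |∂u(e)| is a measure on S, finite on compact subsets of Ω. -/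
open Set MeasureTheory Metric ENNReal

section Aux

variable {N : ℕ} {Ω : Set (EuclideanSpace ℝ (Fin N))} {u : EuclideanSpace ℝ (Fin N) → ℝ}

lemma nmImage_empty : nmImage Ω u ∅ = ∅ := by simp [nmImage]

lemma nmImage_mono {e f : Set (EuclideanSpace ℝ (Fin N))} (h : e ⊆ f) :
    nmImage Ω u e ⊆ nmImage Ω u f := fun _p ⟨x, hx, hp⟩ => ⟨x, h hx, hp⟩

lemma nmImage_iUnion {ι : Sort*} (f : ι → Set (EuclideanSpace ℝ (Fin N))) :
    nmImage Ω u (⋃ i, f i) = ⋃ i, nmImage Ω u (f i) := by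
  ext p
  simp only [nmImage, mem_iUnion, mem_setOf_eq]
  constructor
  · rintro ⟨x, hx, hp⟩
    obtain ⟨i, hi⟩ := hx
    exact ⟨i, x, hi, hp⟩
  · rintro ⟨i, x, hi, hp⟩
    exact ⟨x, ⟨i, hi⟩, hp⟩

lemma exh (V : Set (EuclideanSpace ℝ (Fin N))) (hV : IsOpen V) :
    ∃ K : ℕ → Set (EuclideanSpace ℝ (Fin N)),
      (∀ m, IsCompact (K m)) ∧ (∀ m, K m ⊆ V) ∧ Monotone K ∧ (⋃ m, K m) = V := by
  refine ⟨fun m => closedBall 0 (m+1) ∩ {x | ((m:ℝ≥0∞)+1)⁻¹ ≤ EMetric.infEdist x Vᶜ}, ?_, ?_, ?_, ?_⟩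
  · intro m
    refine (isCompact_closedBall (0:EuclideanSpace ℝ (Fin N)) (m+1)).of_isClosed_subset
      (IsClosed.inter isClosed_closedBall (isClosed_le continuous_const EMetric.continuous_infEdist))
      inter_subset_left
  · intro m x hx
    have h1 : (0:ℝ≥0∞) < EMetric.infEdist x Vᶜ := lt_of_lt_of_le (ENNReal.inv_pos.2 (by simp)) hx.2
    have := EMetric.infEdist_pos_iff_notMem_closure.mp h1
    rw [hV.isClosed_compl.closure_eq] at this
    simpa using this
  · intro m m' hmm x hx
    have hc : ((m:ℝ)+1) ≤ (m':ℝ)+1 := by have := (Nat.cast_le (α := ℝ)).2 hmm; linarith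
    have h2 : ((m':ℝ≥0∞)+1)⁻¹ ≤ EMetric.infEdist x Vᶜ :=
      le_trans (ENNReal.inv_le_inv.mpr (add_le_add (by exact_mod_cast hmm) le_rfl)) hx.2
    exact ⟨closedBall_subset_closedBall hc hx.1, h2⟩
  · refine subset_antisymm (iUnion_subset fun m => fun x hx => ?_) fun x hx => ?_
    · have h1 : (0:ℝ≥0∞) < EMetric.infEdist x Vᶜ := lt_of_lt_of_le (ENNReal.inv_pos.2 (by simp)) hx.2
      have := EMetric.infEdist_pos_iff_notMem_closure.mp h1
      rw [hV.isClosed_compl.closure_eq] at this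
      simpa using this
    · have hpos : (0:ℝ≥0∞) < EMetric.infEdist x Vᶜ := by
        refine EMetric.infEdist_pos_iff_notMem_closure.mpr ?_
        rw [hV.isClosed_compl.closure_eq]
        simpa using hx
      obtain ⟨n, hn⟩ := ENNReal.exists_inv_nat_lt hpos.ne'
      obtain ⟨n', hn'⟩ := exists_nat_ge (‖x‖)
      refine mem_iUnion.2 ⟨max n n', ⟨?_, ?_⟩⟩
      · simp only [mem_closedBall, dist_zero_right]
        calc ‖x‖ ≤ n' := hn'
        _ ≤ (max n n' : ℕ) := by exact_mod_cast le_max_right n n'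
        _ ≤ (max n n' : ℕ) + 1 := by linarith
      · refine le_trans (le_trans ?_ hn.le) le_rfl
        rw [ENNReal.inv_le_inv]
        calc (n:ℝ≥0∞) ≤ (max n n' : ℕ) := by exact_mod_cast le_max_left n n'
        _ ≤ _ := le_self_add

lemma nmImage_isClosed (hΩopen : IsOpen Ω) (hu : ContinuousOn u Ω)
    {K : Set (EuclideanSpace ℝ (Fin N))} (hKΩ : K ⊆ Ω) (hK : IsCompact K) :
    IsClosed (nmImage Ω u K) := by
  refine IsSeqClosed.isClosed ?_
  intro q p hmem hlim
  choose x hxK hx using hmem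
  obtain ⟨a, haK, φ, hφ, hconv⟩ := hK.tendsto_subseq hxK
  refine ⟨a, haK, fun z hz => ?_⟩
  have hua : Filter.Tendsto (fun k => u (x (φ k))) Filter.atTop (nhds (u a)) :=
    ((hu.continuousAt (hΩopen.mem_nhds (hKΩ haK))).tendsto).comp hconv
  have hq : Filter.Tendsto (fun k => q (φ k)) Filter.atTop (nhds p) :=
    hlim.comp hφ.tendsto_atTop
  have hinner : Filter.Tendsto (fun k => @inner ℝ _ _ (q (φ k)) (z - x (φ k)))
      Filter.atTop (nhds (@inner ℝ _ _ p (z - a))) :=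
    hq.inner (Filter.Tendsto.sub tendsto_const_nhds hconv)
  refine le_of_tendsto (hua.add hinner) (Filter.Eventually.of_forall fun k => ?_)
  exact hx (φ k) z hz

lemma nmImage_isCompact (hΩopen : IsOpen Ω) (hu : ContinuousOn u Ω)
    {K : Set (EuclideanSpace ℝ (Fin N))} (hKΩ : K ⊆ Ω) (hK : IsCompact K) :
    IsCompact (nmImage Ω u K) := by
  rcases K.eq_empty_or_nonempty with rfl | ⟨x₀, hx₀⟩
  · simp [nmImage_empty]
  obtain ⟨δ, hδ, hthick⟩ := hK.exists_cthickening_subset_open hΩopen hKΩ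
  have hLcomp : IsCompact (cthickening δ K) := hK.cthickening
  obtain ⟨C, hC⟩ := hLcomp.exists_bound_of_continuousOn (hu.mono hthick)
  have hKL : K ⊆ cthickening δ K := self_subset_cthickening K
  have hbdd : nmImage Ω u K ⊆ closedBall 0 (2*C/δ) := by
    rintro p ⟨x, hxK, hp⟩
    have hC0 : 0 ≤ C := le_trans (norm_nonneg _) (hC x (hKL hxK))
    simp only [mem_closedBall, dist_zero_right]
    rcases eq_or_ne p 0 with rfl | hp0
    · simpa using div_nonneg (by linarith) hδ.le
    have hpnorm : (0:ℝ) < ‖p‖ := norm_pos_iff.2 hp0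
    set z := x + (δ/‖p‖) • p with hzdef
    have hzL : z ∈ cthickening δ K := by
      apply mem_cthickening_of_dist_le z x δ K hxK
      have : dist z x = δ := by
        simp only [hzdef, dist_eq_norm, add_sub_cancel_left, norm_smul]
        rw [Real.norm_of_nonneg (by positivity)]
        field_simp
      linarith [this.le]
    have hzΩ : z ∈ Ω := hthick hzL
    have h1 := hp z hzΩ
    have h2 : @inner ℝ _ _ p (z - x) = δ * ‖p‖ := by
      simp only [hzdef, add_sub_cancel_left, real_inner_smul_right,
        real_inner_self_eq_norm_sq]
      field_simp
    have h3 : δ * ‖p‖ ≤ 2*C := by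
      have h4 : u x + δ * ‖p‖ ≤ u z := by rw [← h2]; exact h1
      have h5 : u z ≤ C := le_trans (le_abs_self _)
        (by simpa [Real.norm_eq_abs] using hC z hzL)
      have h6 : -C ≤ u x := by
        have := hC x (hKL hxK)
        rw [Real.norm_eq_abs, abs_le] at this
        exact this.1
      linarith
    calc ‖p‖ = δ * ‖p‖ / δ := by field_simp
    _ ≤ 2*C/δ := by gcongr
  exact (isCompact_closedBall 0 (2*C/δ)).of_isClosed_subset
    (nmImage_isClosed hΩopen hu hKΩ hK) hbdd

/-- uniqueness of subgradient at differentiability point -/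
lemma sub_unique {v : EuclideanSpace ℝ (Fin N) → ℝ} {p x : EuclideanSpace ℝ (Fin N)}
    (hsub : ∀ q, v p + @inner ℝ _ _ x (q - p) ≤ v q)
    (hd : DifferentiableAt ℝ v p) :
    ∀ q, @inner ℝ _ _ x q = fderiv ℝ v p q := by
  intro q
  set c : ℝ := @inner ℝ _ _ x q with hc
  set g : ℝ → ℝ := fun t => v (p + t • q) - v p - t * c with hg
  have hg0 : g 0 = 0 := by simp [hg]
  have hgnonneg : ∀ t, 0 ≤ g t := by
    intro t
    have := hsub (p + t • q)
    have h2 : @inner ℝ _ _ x (p + t • q - p) = t * c := by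
      rw [add_sub_cancel_left, real_inner_smul_right]
    simp only [hg]
    rw [h2] at this
    linarith
  have hmin : IsLocalMin g 0 := by
    refine Filter.Eventually.of_forall fun t => ?_
    rw [hg0]; exact hgnonneg t
  have h1 : HasDerivAt (fun t : ℝ => p + t • q) q 0 := by
    have := ((hasDerivAt_id (0:ℝ)).smul_const q).const_add p
    simpa using this
  have h2 : HasDerivAt (fun t : ℝ => v (p + t • q)) (fderiv ℝ v p q) 0 := by
    have h3 : HasFDerivAt v (fderiv ℝ v p) (p + (0:ℝ) • q) := by
      simpa using hd.hasFDerivAt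
    exact h3.comp_hasDerivAt 0 h1
  have h4 : HasDerivAt g (fderiv ℝ v p q - c) 0 :=
    (h2.sub_const (v p)).sub (hasDerivAt_mul_const c)
  have := hmin.hasDerivAt_eq_zero h4
  linarith [this]

/-- the set of double-touching slopes over a compact set is null -/
lemma dbl_null (Ω : Set (EuclideanSpace ℝ (Fin N))) (u : EuclideanSpace ℝ (Fin N) → ℝ)
    (hu : ContinuousOn u Ω) (Km : Set (EuclideanSpace ℝ (Fin N)))
    (hKm : IsCompact Km) (hKmΩ : Km ⊆ Ω) :
    volume {p : EuclideanSpace ℝ (Fin N) | ∃ x ∈ Km, ∃ y ∈ Km, x ≠ y ∧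
      (∀ z ∈ Ω, u x + @inner ℝ _ _ p (z - x) ≤ u z) ∧
      (∀ z ∈ Ω, u y + @inner ℝ _ _ p (z - y) ≤ u z)} = 0 := by
  rcases Km.eq_empty_or_nonempty with rfl | hne
  · simp
  obtain ⟨R, hR⟩ := hKm.exists_bound_of_continuousOn (continuous_id.continuousOn)
  have hR0 : 0 ≤ R := le_trans (norm_nonneg _) (hR _ hne.some_mem)
  set v : EuclideanSpace ℝ (Fin N) → ℝ :=
    fun p => sSup ((fun x => @inner ℝ _ _ x p - u x) '' Km) with hv
  have hcont : ∀ p : EuclideanSpace ℝ (Fin N),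
      ContinuousOn (fun x : EuclideanSpace ℝ (Fin N) => @inner ℝ _ _ x p - u x) Km :=
    fun p => ((continuous_id.inner continuous_const).continuousOn).sub (hu.mono hKmΩ)
  have hbdd : ∀ p, BddAbove ((fun x => @inner ℝ _ _ x p - u x) '' Km) :=
    fun p => (hKm.image_of_continuousOn (hcont p)).bddAbove
  have hnonempty : ∀ p, ((fun x => @inner ℝ _ _ x p - u x) '' Km).Nonempty :=
    fun p => hne.image _
  have key : ∀ p q : EuclideanSpace ℝ (Fin N), v p ≤ v q + R * dist p q := by
    intro p q
    refine csSup_le (hnonempty p) ?_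
    rintro a ⟨x, hx, rfl⟩
    dsimp only
    have h1 : @inner ℝ _ _ x q - u x ≤ v q := le_csSup (hbdd q) ⟨x, hx, rfl⟩
    have h2 : @inner ℝ _ _ x p - @inner ℝ _ _ x q ≤ R * dist p q := by
      rw [← inner_sub_right]
      calc @inner ℝ _ _ x (p - q) ≤ ‖x‖ * ‖p - q‖ := real_inner_le_norm x (p-q)
      _ ≤ R * dist p q := by
          rw [dist_eq_norm]
          exact mul_le_mul_of_nonneg_right (hR x hx) (norm_nonneg _)
    linarith
  have hlip : LipschitzWith (Real.toNNReal R) v := by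
    refine LipschitzWith.of_dist_le_mul fun p q => ?_
    rw [Real.dist_eq, abs_sub_le_iff]
    constructor
    · have := key p q
      rw [Real.coe_toNNReal R hR0]
      linarith
    · have := key q p
      rw [dist_comm q p] at this
      rw [Real.coe_toNNReal R hR0]
      linarith
  have hae := hlip.ae_differentiableAt (μ := volume)
  rw [Filter.eventually_iff, mem_ae_iff] at hae
  refine measure_mono_null ?_ hae
  rintro p ⟨x, hx, y, hy, hxy, hpx, hpy⟩
  simp only [mem_compl_iff, mem_setOf_eq]
  intro hdiff
  have hsub : ∀ w ∈ Km, (∀ z ∈ Ω, u w + @inner ℝ _ _ p (z - w) ≤ u z) →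
      ∀ q, v p + @inner ℝ _ _ w (q - p) ≤ v q := by
    intro w hw hpw q
    have hvp : v p = @inner ℝ _ _ w p - u w := by
      refine le_antisymm (csSup_le (hnonempty p) ?_) (le_csSup (hbdd p) ⟨w, hw, rfl⟩)
      rintro a ⟨z, hz, rfl⟩
      dsimp only
      have := hpw z (hKmΩ hz)
      have h2 : @inner ℝ _ _ p (z - w) = @inner ℝ _ _ z p - @inner ℝ _ _ w p := by
        rw [inner_sub_right, real_inner_comm p z, real_inner_comm p w]
      linarith [h2 ▸ this]
    have hvq : @inner ℝ _ _ w q - u w ≤ v q := le_csSup (hbdd q) ⟨w, hw, rfl⟩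
    have h3 : @inner ℝ _ _ w (q - p) = @inner ℝ _ _ w q - @inner ℝ _ _ w p :=
      inner_sub_right w q p
    rw [hvp, h3]
    linarith
  have hx' := sub_unique (hsub x hx hpx) hdiff
  have hy' := sub_unique (hsub y hy hpy) hdiff
  apply hxy
  have hz : ∀ q, @inner ℝ _ _ (x - y) q = 0 := by
    intro q
    rw [inner_sub_left, hx' q, hy' q]
    ring
  have := hz (x - y)
  rw [inner_self_eq_zero] at this
  exact sub_eq_zero.1 this

end Aux

theorem stmt17 (N : ℕ) (hN : 1 ≤ N)
    (Ω : Set (EuclideanSpace ℝ (Fin N))) (hΩopen : IsOpen Ω)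
    (u : EuclideanSpace ℝ (Fin N) → ℝ) (hu : ContinuousOn u Ω) :
    -- the class `S` of sets `e ⊆ Ω` with `∂u(e)` Lebesgue measurable
    letI S : Set (Set (EuclideanSpace ℝ (Fin N))) :=
      {e | e ⊆ Ω ∧ NullMeasurableSet (nmImage Ω u e) volume}
    -- `S` is a σ-algebra of subsets of `Ω`
    (∅ ∈ S) ∧ (Ω ∈ S) ∧
    (∀ e ∈ S, Ω \ e ∈ S) ∧
    (∀ f : ℕ → Set (EuclideanSpace ℝ (Fin N)), (∀ i, f i ∈ S) → (⋃ i, f i) ∈ S) ∧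
    -- `S` contains the Borel subsets of `Ω`
    (∀ e : Set (EuclideanSpace ℝ (Fin N)), e ⊆ Ω → MeasurableSet e → e ∈ S) ∧
    -- `Mu(e) = |∂u(e)|` is countably additive on `S`
    (volume (nmImage Ω u (∅ : Set (EuclideanSpace ℝ (Fin N)))) = 0) ∧
    (∀ f : ℕ → Set (EuclideanSpace ℝ (Fin N)), (∀ i, f i ∈ S) →
      Pairwise (Function.onFun Disjoint f) →
      volume (nmImage Ω u (⋃ i, f i)) = ∑' i, volume (nmImage Ω u (f i))) ∧
    -- `Mu` is finite on compact subsets of `Ω`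
    (∀ K : Set (EuclideanSpace ℝ (Fin N)), K ⊆ Ω → IsCompact K →
      volume (nmImage Ω u K) < ⊤) := by
  -- the exceptional null set of slopes touching at two points
  set Z : Set (EuclideanSpace ℝ (Fin N)) :=
    {p | ∃ x ∈ Ω, ∃ y ∈ Ω, x ≠ y ∧
      (∀ z ∈ Ω, u x + @inner ℝ _ _ p (z - x) ≤ u z) ∧
      (∀ z ∈ Ω, u y + @inner ℝ _ _ p (z - y) ≤ u z)} with hZdef
  obtain ⟨K, hKc, hKΩ, hKmono, hKU⟩ := exh Ω hΩopen
  have hZ : volume Z = 0 := by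
    have hsub : Z ⊆ ⋃ m, {p : EuclideanSpace ℝ (Fin N) | ∃ x ∈ K m, ∃ y ∈ K m, x ≠ y ∧
        (∀ z ∈ Ω, u x + @inner ℝ _ _ p (z - x) ≤ u z) ∧
        (∀ z ∈ Ω, u y + @inner ℝ _ _ p (z - y) ≤ u z)} := by
      rintro p ⟨x, hx, y, hy, hxy, hpx, hpy⟩
      rw [← hKU] at hx hy
      obtain ⟨m₁, hm₁⟩ := mem_iUnion.1 hx
      obtain ⟨m₂, hm₂⟩ := mem_iUnion.1 hy
      exact mem_iUnion.2 ⟨max m₁ m₂,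
        x, hKmono (le_max_left m₁ m₂) hm₁, y, hKmono (le_max_right m₁ m₂) hm₂,
        hxy, hpx, hpy⟩
    refine measure_mono_null hsub (measure_iUnion_null fun m => ?_)
    exact dbl_null Ω u hu (K m) (hKc m) (hKΩ m)
  -- intersections of normal images of disjoint sets sit inside Z
  have hdisj : ∀ e₁ e₂ : Set (EuclideanSpace ℝ (Fin N)), e₁ ⊆ Ω → e₂ ⊆ Ω →
      Disjoint e₁ e₂ → nmImage Ω u e₁ ∩ nmImage Ω u e₂ ⊆ Z := by
    rintro e₁ e₂ h₁ h₂ hd p ⟨⟨x, hx, hpx⟩, ⟨y, hy, hpy⟩⟩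
    refine ⟨x, h₁ hx, y, h₂ hy, ?_, hpx, hpy⟩
    rintro rfl
    exact (hd.ne_of_mem hx hy) rfl
  -- the normal image of (relatively) open sets is null-measurable
  have hopen : ∀ V : Set (EuclideanSpace ℝ (Fin N)), IsOpen V → V ⊆ Ω →
      NullMeasurableSet (nmImage Ω u V) volume := by
    intro V hVopen hVΩ
    obtain ⟨K', hK'c, hK'V, _, hK'U⟩ := exh V hVopen
    rw [← hK'U, nmImage_iUnion]
    refine (MeasurableSet.iUnion fun m => ?_).nullMeasurableSet
    exact (nmImage_isCompact hΩopen hu (fun x hx => hVΩ (hK'V m hx)) (hK'c m)).measurableSet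
  have hΩS : NullMeasurableSet (nmImage Ω u Ω) volume := hopen Ω hΩopen subset_rfl
  -- complement step
  have hcompl : ∀ e : Set (EuclideanSpace ℝ (Fin N)), e ⊆ Ω →
      NullMeasurableSet (nmImage Ω u e) volume →
      NullMeasurableSet (nmImage Ω u (Ω \ e)) volume := by
    intro e heΩ he
    have heq : nmImage Ω u (Ω \ e) =
        (nmImage Ω u Ω \ nmImage Ω u e) ∪ (nmImage Ω u (Ω \ e) ∩ nmImage Ω u e) := by
      apply subset_antisymm
      · intro p hp
        by_cases hpe : p ∈ nmImage Ω u e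
        · exact Or.inr ⟨hp, hpe⟩
        · exact Or.inl ⟨nmImage_mono diff_subset hp, hpe⟩
      · rintro p (⟨hpΩ, hpe⟩ | ⟨hp, _⟩)
        · obtain ⟨x, hxΩ, hpx⟩ := hpΩ
          refine ⟨x, ⟨hxΩ, fun hxe => hpe ⟨x, hxe, hpx⟩⟩, hpx⟩
        · exact hp
    rw [heq]
    refine (hΩS.diff he).union (NullMeasurableSet.of_null ?_)
    exact measure_mono_null
      (hdisj (Ω \ e) e diff_subset heΩ disjoint_sdiff_left) hZ
  refine ⟨?_, ?_, ?_, ?_, ?_, ?_, ?_, ?_⟩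
  · exact ⟨empty_subset Ω, by rw [nmImage_empty]; exact MeasurableSet.empty.nullMeasurableSet⟩
  · exact ⟨subset_rfl, hΩS⟩
  · exact fun e he => ⟨diff_subset, hcompl e he.1 he.2⟩
  · intro f hf
    refine ⟨iUnion_subset fun i => (hf i).1, ?_⟩
    rw [nmImage_iUnion]
    exact NullMeasurableSet.iUnion fun i => (hf i).2
  · -- Borel sets
    intro e heΩ hemeas
    refine ⟨heΩ, ?_⟩
    have main : ∀ ⦃t : Set (EuclideanSpace ℝ (Fin N))⦄, MeasurableSet t →
        NullMeasurableSet (nmImage Ω u (t ∩ Ω)) volume := by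
      refine MeasurableSet.induction_on_open ?_ ?_ ?_
      · intro U hU
        exact hopen (U ∩ Ω) (hU.inter hΩopen) inter_subset_right
      · intro t _ ht
        have : tᶜ ∩ Ω = Ω \ (t ∩ Ω) := by
          ext x
          simp only [mem_inter_iff, mem_compl_iff, mem_diff]
          tauto
        rw [this]
        exact hcompl (t ∩ Ω) inter_subset_right ht
      · intro f _ _ hf
        have : (⋃ i, f i) ∩ Ω = ⋃ i, f i ∩ Ω := iUnion_inter Ω f
        rw [this, nmImage_iUnion]
        exact NullMeasurableSet.iUnion fun i => hf i
    have := main hemeas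
    rwa [inter_eq_self_of_subset_left heΩ] at this
  · rw [nmImage_empty]; exact measure_empty
  · intro f hf hpair
    rw [nmImage_iUnion]
    refine measure_iUnion₀ ?_ fun i => (hf i).2
    intro i j hij
    exact measure_mono_null
      (hdisj (f i) (f j) (hf i).1 (hf j).1 (hpair hij)) hZ
  · intro K' hK'Ω hK'c
    exact (nmImage_isCompact hΩopen hu hK'Ω hK'c).measure_lt_top
end
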